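/- Assume k is algebraically closed with char k not dividing 2n. Let γ : Z(n) → Ẑ(n) be an additive map satisfying γ(i)(j) = γ(j)(i) for all i,j ∈ Z(n). Then there exists a map s : Z(n) → kˣ such that s(i)² = γ(i)(i) and s(i+j) = s(i)·s(j)·γ(i)(j) for all i,j ∈ Z(n); equivalently, the map i ↦ (s(i), i, γ(i)) is a group homomorphism from Z(n) to G(n) whose image consists of symmetric elements of G(n). -/

import Mathlib

namespace ThetaPaper

variable {g n : ℕ} {k : Type*} [Field k]

/-- `Z(n) = (ℤ/nℤ)^g`. -/
abbrev ZGrp (g n : ℕ) := Fin g → ZMod n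

/-- `Ẑ(n) = Hom(Z(n), kˣ)`, the group of `kˣ`-valued characters of `Z(n)`,
written additively. -/
abbrev ZHat (g n : ℕ) (k : Type*) [Field k] := AddChar (ZGrp g n) kˣ

/-- `K(n) = Z(n) × Ẑ(n)`. -/
abbrev KGrp (g n : ℕ) (k : Type*) [Field k] := ZGrp g n × ZHat g n k

/-- The commutator pairing `e_n((x₁,y₁),(x₂,y₂)) = y₁(x₂)·y₂(x₁)⁻¹`. -/
def en (v w : KGrp g n k) : kˣ := v.2 w.1 * (w.2 v.1)⁻¹

/-- The level-`n` Heisenberg group `G(n)`, as the set `kˣ × Z(n) × Ẑ(n)`. -/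
@[ext]
structure Heis (g n : ℕ) (k : Type*) [Field k] where
  t : kˣ
  x : ZGrp g n
  y : ZHat g n k

namespace Heis

/-- The Heisenberg multiplication
`(α₁,x₁,y₁)·(α₂,x₂,y₂) = (α₁α₂·y₂(x₁), x₁+x₂, y₁+y₂)`. -/
instance : Mul (Heis g n k) :=
  ⟨fun a b => ⟨a.t * b.t * b.y a.x, a.x + b.x, a.y + b.y⟩⟩

instance : One (Heis g n k) := ⟨⟨1, 0, 0⟩⟩

instance : Inv (Heis g n k) :=
  ⟨fun a => ⟨a.t⁻¹ * a.y a.x, -a.x, -a.y⟩⟩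

@[simp] lemma mul_t (a b : Heis g n k) : (a * b).t = a.t * b.t * b.y a.x := rfl
@[simp] lemma mul_x (a b : Heis g n k) : (a * b).x = a.x + b.x := rfl
@[simp] lemma mul_y (a b : Heis g n k) : (a * b).y = a.y + b.y := rfl
@[simp] lemma one_t : (1 : Heis g n k).t = 1 := rfl
@[simp] lemma one_x : (1 : Heis g n k).x = 0 := rfl
@[simp] lemma one_y : (1 : Heis g n k).y = 0 := rfl
@[simp] lemma inv_t (a : Heis g n k) : a⁻¹.t = a.t⁻¹ * a.y a.x := rfl
@[simp] lemma inv_x (a : Heis g n k) : a⁻¹.x = -a.x := rfl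
@[simp] lemma inv_y (a : Heis g n k) : a⁻¹.y = -a.y := rfl

instance : Group (Heis g n k) :=
  Group.ofLeftAxioms
    (fun a b c => by
      ext <;>
        simp [AddChar.map_add_eq_mul, mul_assoc, mul_comm, mul_left_comm, add_assoc])
    (fun a => by ext <;> simp)
    (fun a => by
      ext <;> simp [AddChar.map_neg_eq_inv, mul_comm, mul_left_comm, mul_assoc])

/-- The canonical projection `π : G(n) → K(n)`, `(α,x,y) ↦ (x,y)`. -/
def toK (h : Heis g n k) : KGrp g n k := (h.x, h.y)

/-- The automorphism `D₋₁ : (α,x,y) ↦ (α,−x,−y)`. -/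
def Dneg (h : Heis g n k) : Heis g n k := ⟨h.t, -h.x, -h.y⟩

/-- A symmetric element of the Heisenberg group: `D₋₁(h) = h⁻¹`. -/
def IsSymElem (h : Heis g n k) : Prop := Dneg h = h⁻¹

end Heis

/-- The `ψ`-semi-character identity:
`χ(v+w) = χ(v)·χ(w)·[ψ(w)₂(ψ(v)₁)]·[w₂(v₁)]⁻¹`. -/
def IsSemiChar (ψ : KGrp g n k → KGrp g n k) (χ : KGrp g n k → kˣ) : Prop :=
  ∀ v w : KGrp g n k,
    χ (v + w) = χ v * χ w * (ψ w).2 (ψ v).1 * ((w.2 v.1)⁻¹ : kˣ)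

/-- A symmetric (semi-)character: `χ(−v) = χ(v)`. -/
def IsSymmChar (χ : KGrp g n k → kˣ) : Prop := ∀ v : KGrp g n k, χ (-v) = χ v

/-- `ψ̄ ∈ Sp(K(n))`: an additive automorphism preserving the pairing `e_n`. -/
def IsSymplectic (ψ : KGrp g n k ≃+ KGrp g n k) : Prop :=
  ∀ v w : KGrp g n k, en (ψ v) (ψ w) = en v w


section AuxSqrt

variable (k)

private lemma units_pow_surj [IsAlgClosed k] (m : ℕ) (hm : m ≠ 0) :
    Function.Surjective (fun u : kˣ => u ^ m) := by
  intro v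
  obtain ⟨z, hz⟩ := IsAlgClosed.exists_pow_nat_eq (v : k) (Nat.pos_of_ne_zero hm)
  have hz0 : z ≠ 0 := by
    intro h
    rw [h, zero_pow hm] at hz
    exact v.ne_zero hz.symm
  refine ⟨Units.mk0 z hz0, Units.ext ?_⟩
  simpa using hz

private lemma baer_units [IsAlgClosed k] : Module.Baer ℤ (Additive kˣ) := by
  haveI : DivisibleBy (Additive kˣ) ℤ := by
    refine divisibleByOfSMulRightSurj _ _ ?_
    intro z hz a
    rcases z with m | m
    · have hm : m ≠ 0 := by simpa using hz
      obtain ⟨w, hw⟩ := units_pow_surj k m hm a.toMul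
      refine ⟨Additive.ofMul w, Additive.toMul.injective ?_⟩
      rw [toMul_zsmul]
      simpa [zpow_natCast] using hw
    · obtain ⟨w, hw⟩ := units_pow_surj k (m + 1) (Nat.succ_ne_zero m) a.toMul⁻¹
      refine ⟨Additive.ofMul w, Additive.toMul.injective ?_⟩
      rw [toMul_zsmul, zpow_negSucc]
      have hw' : w ^ (m + 1) = a.toMul⁻¹ := hw
      rw [toMul_ofMul, hw', inv_inv]
  exact Module.Baer.of_divisible _

end AuxSqrt

/-- Auxiliary extension group carrier. -/
private structure ExtE (g n : ℕ) (k : Type*) [Field k] where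
  u : kˣ
  v : ZGrp g n

/-- over an algebraically closed field of characteristic not dividing
`2n`, any symmetric additive map `γ : Z(n) → Ẑ(n)` admits a consistent system of
square roots `s(i)` of `γ(i)(i)`; equivalently `i ↦ (s(i), i, γ(i))` is a group
homomorphism `Z(n) → G(n)` with symmetric image. -/
theorem consistent_square_roots (g n : ℕ) (hg : 1 ≤ g) (hn : 1 ≤ n)
    (k : Type*) [Field k] [IsAlgClosed k] (hchar : ((2 * n : ℕ) : k) ≠ 0)
    (γ : ZGrp g n →+ ZHat g n k)
    (hγ : ∀ i j : ZGrp g n, γ i j = γ j i) :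
    ∃ s : ZGrp g n → kˣ,
      (∀ i, s i ^ 2 = γ i i) ∧
      (∀ i j, s (i + j) = s i * s j * γ i j) ∧
      (∀ i j, (⟨s (i + j), i + j, γ (i + j)⟩ : Heis g n k) =
        (⟨s i, i, γ i⟩ : Heis g n k) * ⟨s j, j, γ j⟩) ∧
      (∀ i, Heis.IsSymElem (⟨s i, i, γ i⟩ : Heis g n k)) := by
  classical
  set b : ZGrp g n → ZGrp g n → kˣ := fun i j => γ i j with hb
  have hbil₁ : ∀ i i' j, b (i + i') j = b i j * b i' j := by
    intro i i' j
    simp only [hb, map_add, AddChar.add_apply]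
  have hbil₂ : ∀ i j j', b i (j + j') = b i j * b i j' := by
    intro i j j'
    simp only [hb, AddChar.map_add_eq_mul]
  have hb0l : ∀ j, b 0 j = 1 := by intro j; simp [hb]
  have hb0r : ∀ i, b i 0 = 1 := by intro i; simp [hb]
  have hbneg : ∀ i j, b (-i) j = (b i j)⁻¹ := by
    intro i j
    simp [hb, map_neg, AddChar.neg_apply, AddChar.map_neg_eq_inv]
  -- the abelian extension group structure on ExtE
  letI : Mul (ExtE g n k) := ⟨fun a c => ⟨a.u * c.u * b a.v c.v, a.v + c.v⟩⟩
  letI : One (ExtE g n k) := ⟨⟨1, 0⟩⟩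
  letI : Inv (ExtE g n k) := ⟨fun a => ⟨a.u⁻¹ * b a.v a.v, -a.v⟩⟩
  have hmul : ∀ a c : ExtE g n k, a * c = ⟨a.u * c.u * b a.v c.v, a.v + c.v⟩ :=
    fun _ _ => rfl
  letI grpE : Group (ExtE g n k) :=
    Group.ofLeftAxioms
      (by
        intro a c d
        rw [hmul, hmul, hmul, hmul]
        simp only [hbil₁, hbil₂]
        congr 1
        · ac_rfl
        · exact add_assoc _ _ _)
      (by
        intro a
        show (⟨1 * a.u * b 0 a.v, 0 + a.v⟩ : ExtE g n k) = a
        rw [hb0l, one_mul, mul_one, zero_add])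
      (by
        intro a
        show (⟨a.u⁻¹ * b a.v a.v * a.u * b (-a.v) a.v, -a.v + a.v⟩ : ExtE g n k) = ⟨1, 0⟩
        rw [hbneg, neg_add_cancel]
        congr 1
        rw [Units.ext_iff]
        push_cast
        field_simp)
  letI : CommGroup (ExtE g n k) :=
    { grpE with
      mul_comm := by
        intro a c
        rw [hmul, hmul]
        have hcomm : b a.v c.v = b c.v a.v := hγ a.v c.v
        rw [hcomm]
        congr 1
        · ac_rfl
        · exact add_comm _ _ }
  have hbaer := baer_units k
  let ι : kˣ →* ExtE g n k :=
    { toFun := fun x => ⟨x, 0⟩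
      map_one' := rfl
      map_mul' := by
        intro x y
        rw [hmul, hb0l, mul_one, add_zero] }
  have hι : Function.Injective (MonoidHom.toAdditive ι) := by
    intro x y hxy
    have h1 : (⟨x.toMul, 0⟩ : ExtE g n k) = ⟨y.toMul, 0⟩ := congrArg Additive.toMul hxy
    have h2 := congrArg ExtE.u h1
    exact Additive.toMul.injective h2
  obtain ⟨r, hr⟩ := hbaer.extension_property_addMonoidHom
    (MonoidHom.toAdditive ι) hι (AddMonoidHom.id (Additive kˣ))
  have hrι : ∀ x : kˣ, Additive.toMul (r (Additive.ofMul (⟨x, 0⟩ : ExtE g n k))) = x := by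
    intro x
    have := DFunLike.congr_fun hr (Additive.ofMul x)
    exact congrArg Additive.toMul this
  set R : ExtE g n k → kˣ := fun h => Additive.toMul (r (Additive.ofMul h)) with hR
  have hRmul : ∀ a c : ExtE g n k, R (a * c) = R a * R c := by
    intro a c
    show Additive.toMul (r (Additive.ofMul (a * c))) = _
    rw [ofMul_mul, map_add]
    rfl
  -- the tautological section and the first semicharacter s₀
  set hh : ZGrp g n → ExtE g n k := fun i => ⟨1, i⟩ with hhh
  have hkey : ∀ i j, hh i * hh j = (⟨b i j, 0⟩ : ExtE g n k) * hh (i + j) := by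
    intro i j
    rw [hmul, hmul]
    show (⟨1 * 1 * b i j, i + j⟩ : ExtE g n k) = ⟨b i j * 1 * b 0 (i + j), 0 + (i + j)⟩
    rw [hb0l, one_mul, one_mul, mul_one, mul_one, zero_add]
  set s₀ : ZGrp g n → kˣ := fun i => (R (hh i))⁻¹ with hs₀def
  have hs₀ : ∀ i j, s₀ (i + j) = s₀ i * s₀ j * b i j := by
    intro i j
    have h1 : R (hh i) * R (hh j) = b i j * R (hh (i + j)) := by
      rw [← hRmul, hkey, hRmul]
      congr 1
      exact hrι (b i j)
    have h1' : (R (hh i) : k) * R (hh j) = (b i j : k) * R (hh (i + j)) := by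
      exact_mod_cast congrArg Units.val h1
    show (R (hh (i + j)))⁻¹ = (R (hh i))⁻¹ * (R (hh j))⁻¹ * b i j
    rw [Units.ext_iff]
    push_cast
    field_simp
    linear_combination h1'
  have hs₀0 : s₀ 0 = 1 := by
    have h := hs₀ 0 0
    rw [add_zero, hb0r, mul_one] at h
    have h2 : s₀ 0 * 1 = s₀ 0 * s₀ 0 := by rw [mul_one]; exact h
    exact (mul_left_cancel h2).symm
  -- the defect homomorphism
  set lamf : ZGrp g n → kˣ := fun i => s₀ i ^ 2 * (b i i)⁻¹ with hlamf
  have hbsum : ∀ i j, b (i + j) (i + j) = b i i * b i j * (b i j * b j j) := by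
    intro i j
    rw [hbil₂, hbil₁, hbil₁]
    have hji : b j i = b i j := hγ j i
    rw [hji]
  have hlam_add : ∀ i j, lamf (i + j) = lamf i * lamf j := by
    intro i j
    have h1' : ((s₀ (i + j) : k)) = (s₀ i : k) * s₀ j * b i j := by
      exact_mod_cast congrArg Units.val (hs₀ i j)
    have h2' : (b (i + j) (i + j) : k) = (b i i : k) * b i j * ((b i j : k) * b j j) := by
      exact_mod_cast congrArg Units.val (hbsum i j)
    show s₀ (i + j) ^ 2 * (b (i + j) (i + j))⁻¹ =
      s₀ i ^ 2 * (b i i)⁻¹ * (s₀ j ^ 2 * (b j j)⁻¹)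
    rw [Units.ext_iff]
    push_cast
    rw [h1', h2']
    field_simp
  have hbsq : ∀ j : ZGrp g n, j + j = 0 → b j j * b j j = 1 := by
    intro j hj
    rw [← hbil₂, hj, hb0r]
  have hker : ∀ j : ZGrp g n, j + j = 0 → lamf j = 1 := by
    intro j hj
    have h1 : s₀ (j + j) = s₀ j * s₀ j * b j j := hs₀ j j
    rw [hj, hs₀0] at h1
    have h2 : s₀ j * s₀ j * b j j = 1 := h1.symm
    have h3 : s₀ j * s₀ j = (b j j)⁻¹ := eq_inv_of_mul_eq_one_left h2
    show s₀ j ^ 2 * (b j j)⁻¹ = 1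
    rw [sq, h3, ← mul_inv, hbsq j hj, inv_one]
  -- factor lamf through doubling and extend by divisibility
  set dmap : ZGrp g n →+ ZGrp g n :=
    AddMonoidHom.mk' (fun x => x + x) (by intro a c; abel_nf) with hdmap
  set lam' : ZGrp g n →+ Additive kˣ :=
    AddMonoidHom.mk' (fun i => Additive.ofMul (lamf i))
      (by
        intro a c
        show Additive.ofMul (lamf (a + c)) = _
        rw [hlam_add]
        rfl) with hlam'
  have hker' : ∀ x ∈ dmap.ker, lam' x = 0 := by
    intro x hx
    rw [AddMonoidHom.mem_ker] at hx
    have hx' : x + x = 0 := hx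
    show Additive.ofMul (lamf x) = 0
    rw [hker x hx']
    rfl
  obtain ⟨Ψ, hΨ⟩ := hbaer.extension_property_addMonoidHom
    (QuotientAddGroup.kerLift dmap) (QuotientAddGroup.kerLift_injective dmap)
    (QuotientAddGroup.lift dmap.ker lam' hker')
  have hΨ' : ∀ x : ZGrp g n, Ψ (x + x) = Additive.ofMul (lamf x) := by
    intro x
    have h1 := DFunLike.congr_fun hΨ (QuotientAddGroup.mk (s := dmap.ker) x)
    simp only [AddMonoidHom.comp_apply] at h1
    rw [QuotientAddGroup.kerLift_mk] at h1
    change Ψ (dmap x) = lam' x at h1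
    have hdx : dmap x = x + x := rfl
    rw [hdx] at h1
    exact h1
  set μ : ZGrp g n → kˣ := fun i => (Additive.toMul (Ψ i))⁻¹ with hμ
  have hμmul : ∀ i j, μ (i + j) = μ i * μ j := by
    intro i j
    show (Additive.toMul (Ψ (i + j)))⁻¹ = _
    rw [map_add, toMul_add, mul_inv]
  have hμsq : ∀ i, μ i ^ 2 = (lamf i)⁻¹ := by
    intro i
    have h1 : Ψ i + Ψ i = Additive.ofMul (lamf i) := by
      rw [← map_add]
      exact hΨ' i
    have h2 : Additive.toMul (Ψ i) * Additive.toMul (Ψ i) = lamf i := by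
      rw [← toMul_add, h1, toMul_ofMul]
    show (Additive.toMul (Ψ i))⁻¹ ^ 2 = (lamf i)⁻¹
    rw [sq, ← mul_inv, h2]
  -- wrap up
  have h1 : ∀ i, lamf i * b i i = s₀ i ^ 2 := fun i => inv_mul_cancel_right _ _
  have hsq : ∀ i, (s₀ i * μ i) ^ 2 = γ i i := by
    intro i
    rw [mul_pow, hμsq, ← h1 i, mul_comm (lamf i) (b i i), mul_inv_cancel_right]
  have hadd : ∀ i j, s₀ (i + j) * μ (i + j) = s₀ i * μ i * (s₀ j * μ j) * b i j := by
    intro i j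
    rw [hs₀ i j, hμmul i j]
    ac_rfl
  refine ⟨fun i => s₀ i * μ i, ?_, ?_, ?_, ?_⟩
  · intro i
    exact hsq i
  · intro i j
    exact hadd i j
  · intro i j
    refine Heis.ext ?_ rfl (map_add γ i j)
    show s₀ (i + j) * μ (i + j) = s₀ i * μ i * (s₀ j * μ j) * b j i
    have hji : b j i = b i j := hγ j i
    rw [hji]
    exact hadd i j
  · intro i
    refine Heis.ext ?_ rfl rfl
    show s₀ i * μ i = (s₀ i * μ i)⁻¹ * γ i i
    rw [← hsq i, sq, inv_mul_cancel_left]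

end ThetaPaper
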